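/- Let F and G be finite sets of monomials in k[x_1,...,x_n] with F ⊆ G, and let A and B be the log-matrices of F and G respectively (the integer matrices whose columns are the exponent vectors of the monomials). Then the ring extension k[F] ⊆ k[G] is birational (i.e., the fraction fields of k[F] and k[G] coincide) if and only if ℤA = ℤB, where ℤC denotes the subgroup of ℤ^n generated by the columns of C. -/

import Mathlib

open MvPolynomial

/-- The subfield of the fraction field of `k[x_1,…,x_n]` generated by the subalgebra
`k[S]` generated by a set `S` of polynomials; its elements are exactly the fractions
of elements of `k[S]`, i.e. this is the fraction field of `k[S]`. -/
noncomputable def fractionFieldOf (n : ℕ) (k : Type*) [Field k]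
    (S : Set (MvPolynomial (Fin n) k)) :
    Subfield (FractionRing (MvPolynomial (Fin n) k)) :=
  Subfield.closure
    ((algebraMap (MvPolynomial (Fin n) k) (FractionRing (MvPolynomial (Fin n) k))) ''
      (Algebra.adjoin k S : Set (MvPolynomial (Fin n) k)))

section Aux

variable {n : ℕ} {k : Type*} [Field k]

/-- Monomials with exponent in the additive monoid generated by `F` lie in `k[F]`. -/
lemma aux_monomial_mem (F : Set (Fin n →₀ ℕ)) {α : Fin n →₀ ℕ}
    (hα : α ∈ AddSubmonoid.closure F) :
    monomial α (1 : k) ∈ Algebra.adjoin k ((fun v => monomial v (1 : k)) '' F) := by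
  induction hα using AddSubmonoid.closure_induction with
  | mem x hx => exact Algebra.subset_adjoin ⟨x, hx, rfl⟩
  | zero => simpa using Subalgebra.one_mem _
  | add x y hx hy ihx ihy =>
      have : monomial (x + y) (1 : k) = monomial x (1:k) * monomial y (1:k) := by
        rw [monomial_mul, one_mul]
      rw [this]; exact mul_mem ihx ihy

/-- The subalgebra of polynomials all of whose monomials have exponent in the
monoid generated by `F`. -/
def supportSubalgebra (k : Type*) [Field k] (F : Set (Fin n →₀ ℕ)) :
    Subalgebra k (MvPolynomial (Fin n) k) where
  carrier := {p | ∀ m ∈ p.support, m ∈ AddSubmonoid.closure F}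
  mul_mem' := by
    classical
    intro p q hp hq m hm
    obtain ⟨a, ha, b, hb, rfl⟩ := Finset.mem_add.mp (support_mul p q hm)
    exact add_mem (hp a ha) (hq b hb)
  add_mem' := by
    classical
    intro p q hp hq m hm
    rcases Finset.mem_union.mp (support_add hm) with h | h
    · exact hp m h
    · exact hq m h
  algebraMap_mem' := by
    intro c m hm
    have := mem_support_iff.mp hm
    rw [algebraMap_eq, coeff_C] at this
    have : 0 = m := by by_contra h; simp [h] at this
    exact this ▸ zero_mem _

lemma aux_support_subset (F : Set (Fin n →₀ ℕ)) {p : MvPolynomial (Fin n) k}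
    (hp : p ∈ Algebra.adjoin k ((fun v => monomial v (1 : k)) '' F)) :
    ∀ m ∈ p.support, m ∈ AddSubmonoid.closure F := by
  have : Algebra.adjoin k ((fun v => monomial v (1 : k)) '' F) ≤ supportSubalgebra k F := by
    apply Algebra.adjoin_le
    rintro _ ⟨v, hv, rfl⟩ m hm
    classical
    rcases Finset.mem_singleton.mp (support_monomial_subset hm) with rfl
    exact AddSubmonoid.subset_closure hv
  exact this hp

lemma aux_vec_mem_span (F : Set (Fin n →₀ ℕ)) {α : Fin n →₀ ℕ}
    (hα : α ∈ AddSubmonoid.closure F) :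
    (fun i => (α i : ℤ)) ∈
      Submodule.span ℤ ((fun v : Fin n →₀ ℕ => fun i => (v i : ℤ)) '' F) := by
  induction hα using AddSubmonoid.closure_induction with
  | mem x hx => exact Submodule.subset_span ⟨x, hx, rfl⟩
  | zero =>
      have : (fun i => (((0 : Fin n →₀ ℕ)) i : ℤ)) = (0 : Fin n → ℤ) := by
        funext i; simp
      rw [this]; exact zero_mem _
  | add x y hx hy ihx ihy =>
      have : (fun i => (((x + y : Fin n →₀ ℕ)) i : ℤ))
          = (fun i => (x i : ℤ)) + (fun i => (y i : ℤ)) := by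
        funext i; simp [Finsupp.add_apply]
      rw [this]; exact add_mem ihx ihy

lemma aux_span_decomp (F : Set (Fin n →₀ ℕ)) (g : Fin n →₀ ℕ)
    (hg : (fun i => (g i : ℤ)) ∈
      Submodule.span ℤ ((fun v : Fin n →₀ ℕ => fun i => (v i : ℤ)) '' F)) :
    ∃ α ∈ AddSubmonoid.closure F, ∃ β ∈ AddSubmonoid.closure F, g + β = α := by
  set D : Set (Fin n → ℤ) :=
    {z | ∃ α ∈ AddSubmonoid.closure F, ∃ β ∈ AddSubmonoid.closure F,
      (fun i => (α i : ℤ) - (β i : ℤ)) = z} with hD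
  have key : ∀ z ∈ Submodule.span ℤ ((fun v : Fin n →₀ ℕ => fun i => (v i : ℤ)) '' F), z ∈ D := by
    intro z hz
    induction hz using Submodule.span_induction with
    | mem x hx =>
        obtain ⟨v, hv, rfl⟩ := hx
        exact ⟨v, AddSubmonoid.subset_closure hv, 0, zero_mem _, by funext i; simp⟩
    | zero => exact ⟨0, zero_mem _, 0, zero_mem _, by funext i; simp⟩
    | add x y hx hy ihx ihy =>
        obtain ⟨a, ha, b, hb, rfl⟩ := ihx
        obtain ⟨c, hc, d, hd, rfl⟩ := ihy
        exact ⟨a + c, add_mem ha hc, b + d, add_mem hb hd, by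
          funext i; simp [Finsupp.add_apply]; ring⟩
    | smul m x hx ihx =>
        obtain ⟨a, ha, b, hb, rfl⟩ := ihx
        rcases m with m | m
        · exact ⟨m • a, nsmul_mem ha m, m • b, nsmul_mem hb m, by
            funext i; simp [Finsupp.smul_apply]; ring⟩
        · refine ⟨(m + 1) • b, nsmul_mem hb (m+1),
            (m + 1) • a, nsmul_mem ha (m+1), ?_⟩
          funext i
          simp [Finsupp.smul_apply, Int.negSucc_eq]
          ring
  obtain ⟨α, hα, β, hβ, hz⟩ := key _ hg
  refine ⟨α, hα, β, hβ, ?_⟩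
  ext i
  have := congrFun hz i
  have : ((g + β : Fin n →₀ ℕ) i : ℤ) = (α i : ℤ) := by
    simp [Finsupp.add_apply]; omega
  exact_mod_cast this

end Aux

/-- Preimage of a subfield of the fraction field containing the scalars,
as a subalgebra of the polynomial ring. -/
def fracPreimage (n : ℕ) (k : Type*) [Field k]
    (E : Subfield (FractionRing (MvPolynomial (Fin n) k)))
    (hE : ∀ c : k, algebraMap (MvPolynomial (Fin n) k)
      (FractionRing (MvPolynomial (Fin n) k)) (algebraMap k _ c) ∈ E) :
    Subalgebra k (MvPolynomial (Fin n) k) where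
  carrier := {p | algebraMap (MvPolynomial (Fin n) k)
    (FractionRing (MvPolynomial (Fin n) k)) p ∈ E}
  mul_mem' := by
    intro p q hp hq
    show algebraMap (MvPolynomial (Fin n) k) (FractionRing (MvPolynomial (Fin n) k)) (p * q) ∈ E
    rw [map_mul]
    exact mul_mem hp hq
  add_mem' := by
    intro p q hp hq
    show algebraMap (MvPolynomial (Fin n) k) (FractionRing (MvPolynomial (Fin n) k)) (p + q) ∈ E
    rw [RingHom.map_add]
    exact add_mem hp hq
  algebraMap_mem' := hE

/-- (APB) For finite sets of monomials `F ⊆ G` (given by their exponent vectors),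
the extension `k[F] ⊆ k[G]` is birational (the fraction fields coincide) if and only
if the columns of the respective log-matrices generate the same subgroup of `ℤ^n`. -/
theorem stmt_2 (n : ℕ) (k : Type*) [Field k]
    (F G : Finset (Fin n →₀ ℕ)) (hFG : F ⊆ G) :
    (fractionFieldOf n k ((fun v => monomial v (1 : k)) '' (F : Set (Fin n →₀ ℕ))) =
      fractionFieldOf n k ((fun v => monomial v (1 : k)) '' (G : Set (Fin n →₀ ℕ))))
    ↔ Submodule.span ℤ ((fun v : Fin n →₀ ℕ => fun i => (v i : ℤ)) '' (F : Set (Fin n →₀ ℕ))) =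
      Submodule.span ℤ ((fun v : Fin n →₀ ℕ => fun i => (v i : ℤ)) '' (G : Set (Fin n →₀ ℕ))) := by
  classical
  set R := MvPolynomial (Fin n) k with hR
  set K := FractionRing R with hK
  set φ := algebraMap R K with hφ
  have hinj : Function.Injective φ := IsFractionRing.injective R K
  constructor
  · intro hfield
    refine le_antisymm (Submodule.span_mono (Set.image_mono (by exact_mod_cast hFG))) ?_
    rw [Submodule.span_le]
    rintro _ ⟨g, hg, rfl⟩
    have hmem : φ (monomial g (1 : k)) ∈
        fractionFieldOf n k ((fun v => monomial v (1 : k)) '' (F : Set (Fin n →₀ ℕ))) := by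
      rw [hfield]
      exact Subfield.subset_closure ⟨_, Algebra.subset_adjoin ⟨g, hg, rfl⟩, rfl⟩
    rw [fractionFieldOf, Subfield.mem_closure_iff] at hmem
    obtain ⟨y, hy, z, hz, hyz⟩ := hmem
    set A := Algebra.adjoin k ((fun v => monomial v (1 : k)) '' (F : Set (Fin n →₀ ℕ))) with hA
    have hcl : Subring.closure (φ '' (A : Set R)) = A.toSubring.map φ := by
      rw [← RingHom.map_closure]
      congr 1
      rw [← Subalgebra.coe_toSubring, Subring.closure_eq]
    rw [hcl, Subring.mem_map] at hy hz
    obtain ⟨a, ha, rfl⟩ := hy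
    obtain ⟨b, hb, rfl⟩ := hz
    have hg0 : (monomial g (1 : k) : R) ≠ 0 := by simp
    have hφg0 : φ (monomial g (1 : k)) ≠ 0 := by
      rw [map_ne_zero_iff φ hinj]; exact hg0
    have hb0 : b ≠ 0 := by
      rintro rfl
      rw [map_zero, div_zero] at hyz
      exact hφg0 hyz.symm
    have hφb0 : φ b ≠ 0 := by rwa [map_ne_zero_iff φ hinj]
    have hab : a = monomial g (1 : k) * b := by
      apply hinj
      rw [map_mul, ← hyz, div_mul_cancel₀ _ hφb0]
    obtain ⟨β, hβ⟩ : b.support.Nonempty :=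
      Finset.nonempty_iff_ne_empty.mpr (fun h => hb0 (support_eq_empty.mp h))
    have hsup : g + β ∈ a.support := by
      rw [mem_support_iff, hab, coeff_monomial_mul, one_mul]
      exact mem_support_iff.mp hβ
    have hαF : g + β ∈ AddSubmonoid.closure (F : Set (Fin n →₀ ℕ)) :=
      aux_support_subset _ ha _ hsup
    have hβF : β ∈ AddSubmonoid.closure (F : Set (Fin n →₀ ℕ)) :=
      aux_support_subset _ hb _ hβ
    have hvg : (fun i => (g i : ℤ)) =
        (fun i => (((g + β : Fin n →₀ ℕ)) i : ℤ)) - (fun i => (β i : ℤ)) := by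
      funext i; simp [Finsupp.add_apply]
    show (fun i => (g i : ℤ)) ∈
      (Submodule.span ℤ ((fun v : Fin n →₀ ℕ => fun i => (v i : ℤ)) '' (F : Set (Fin n →₀ ℕ))) : Set (Fin n → ℤ))
    rw [hvg]
    exact sub_mem (aux_vec_mem_span _ hαF) (aux_vec_mem_span _ hβF)
  · intro hspan
    apply le_antisymm
    · exact Subfield.closure_mono (Set.image_mono
        (Algebra.adjoin_mono (Set.image_mono (by exact_mod_cast hFG))))
    · have hE : ∀ c : k, φ (algebraMap k R c) ∈
          fractionFieldOf n k ((fun v => monomial v (1 : k)) '' (F : Set (Fin n →₀ ℕ))) :=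
        fun c => Subfield.subset_closure ⟨_, Subalgebra.algebraMap_mem _ c, rfl⟩
      have hadj : Algebra.adjoin k ((fun v => monomial v (1 : k)) '' (G : Set (Fin n →₀ ℕ)))
          ≤ fracPreimage n k _ hE := by
        apply Algebra.adjoin_le
        rintro _ ⟨g, hg, rfl⟩
        have hgspan : (fun i => (g i : ℤ)) ∈
            Submodule.span ℤ ((fun v : Fin n →₀ ℕ => fun i => (v i : ℤ)) '' (F : Set (Fin n →₀ ℕ))) := by
          rw [hspan]
          exact Submodule.subset_span ⟨g, hg, rfl⟩
        obtain ⟨α, hα, β, hβ, hgβ⟩ := aux_span_decomp _ _ hgspan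
        have hβ0 : (monomial β (1 : k) : MvPolynomial (Fin n) k) ≠ 0 := by simp
        have hφβ0 : φ (monomial β (1 : k)) ≠ 0 := by
          rw [map_ne_zero_iff φ hinj]
          exact hβ0
        have heq : φ (monomial g (1 : k)) =
            φ (monomial α (1 : k)) / φ (monomial β (1 : k)) := by
          rw [eq_div_iff hφβ0, ← map_mul, monomial_mul, mul_one, hgβ]
        show φ (monomial g (1 : k)) ∈
          fractionFieldOf n k ((fun v => monomial v (1 : k)) '' (F : Set (Fin n →₀ ℕ)))
        rw [heq]
        exact div_mem (Subfield.subset_closure ⟨_, aux_monomial_mem _ hα, rfl⟩)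
          (Subfield.subset_closure ⟨_, aux_monomial_mem _ hβ, rfl⟩)
      rw [fractionFieldOf]
      apply Subfield.closure_le.mpr
      rintro _ ⟨p, hp, rfl⟩
      exact hadj hp
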